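/- If an infinite word w over a finite alphabet has only finitely many weakly abelian unbordered factors, then w is balanced. -/

import Mathlib

def factor {α : Type*} (w : ℕ → α) (i n : ℕ) : List α :=
  (List.range n).map (fun k => w (i + k))

def IsFactor {α : Type*} (u : List α) (w : ℕ → α) : Prop :=
  ∃ i, factor w i u.length = u

def SameFreq {α : Type*} [DecidableEq α] (u v : List α) : Prop :=
  ∀ a : α, (u.count a : ℚ) / u.length = (v.count a : ℚ) / v.length

def WeaklyAbelianBordered {α : Type*} [DecidableEq α] (w : List α) : Prop :=
  ∃ p s : List α, p <+: w ∧ s <:+ w ∧ p ≠ [] ∧ p.length < w.length ∧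
    s ≠ [] ∧ s.length < w.length ∧ SameFreq p s


namespace Stmt11Aux

/-- `cc f i j t` is (scaled) signed height of point `(t, f t)` above the chord from
`(i, f i)` to `(j, f j)`. -/
def cc (f : ℕ → ℤ) (i j t : ℕ) : ℤ :=
  (f t - f i) * ((j : ℤ) - (i : ℤ)) - (f j - f i) * ((t : ℤ) - (i : ℤ))

lemma cc_left (f : ℕ → ℤ) (i j : ℕ) : cc f i j i = 0 := by unfold cc; ring
lemma cc_right (f : ℕ → ℤ) (i j : ℕ) : cc f i j j = 0 := by unfold cc; ring

/-- `s` is on the upper convex hull of the points `(t, f t)`, `t ≤ T`. -/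
def IsHull (f : ℕ → ℤ) (T s : ℕ) : Prop :=
  s ≤ T ∧ ∀ i j : ℕ, i ≤ s → s ≤ j → j ≤ T → 0 ≤ cc f i j s

lemma hull_zero (f : ℕ → ℤ) (T : ℕ) : IsHull f T 0 := by
  refine ⟨Nat.zero_le T, fun i j hi _ _ => ?_⟩
  obtain rfl : i = 0 := Nat.le_zero.mp hi
  rw [cc_left]

lemma hull_top (f : ℕ → ℤ) (T : ℕ) : IsHull f T T := by
  refine ⟨le_rfl, fun i j _ hj hjT => ?_⟩
  obtain rfl : j = T := le_antisymm hjT hj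
  rw [cc_right]

/-- Between two consecutive hull points, all points lie strictly below the chord. -/
lemma gap_strict (f : ℕ → ℤ) (T t1 t2 : ℕ)
    (h1 : IsHull f T t1) (h2 : IsHull f T t2) (h12 : t1 < t2)
    (hno : ∀ s, t1 < s → s < t2 → ¬ IsHull f T s) :
    ∀ t, t1 < t → t < t2 → cc f t1 t2 t < 0 := by
  intro t ht1 ht2
  by_contra hcon
  push_neg at hcon
  have hne : (Finset.Ioo t1 t2).Nonempty := ⟨t, Finset.mem_Ioo.mpr ⟨ht1, ht2⟩⟩
  obtain ⟨m, hmmem, hmax⟩ := Finset.exists_max_image (Finset.Ioo t1 t2) (fun s => cc f t1 t2 s) hne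
  rw [Finset.mem_Ioo] at hmmem
  obtain ⟨hm1, hm2⟩ := hmmem
  have hmax' : ∀ s, t1 < s → s < t2 → cc f t1 t2 s ≤ cc f t1 t2 m := by
    intro s hs1 hs2
    exact hmax s (Finset.mem_Ioo.mpr ⟨hs1, hs2⟩)
  have hκm : 0 ≤ cc f t1 t2 m := le_trans hcon (hmax' t ht1 ht2)
  have hmT : m ≤ T := le_trans hm2.le h2.1
  have hnH := hno m hm1 hm2
  rw [IsHull] at hnH
  push_neg at hnH
  obtain ⟨i, j, hi, hj, hjT, hneg⟩ := hnH hmT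
  -- i < m and m < j
  have him : i < m := by
    rcases lt_or_eq_of_le hi with h | h
    · exact h
    · exfalso; rw [← h] at hneg; rw [cc_left] at hneg; exact absurd hneg (by norm_num)
  have hmj : m < j := by
    rcases lt_or_eq_of_le hj with h | h
    · exact h
    · exfalso; rw [h] at hneg; rw [cc_right] at hneg; exact absurd hneg (by norm_num)
  -- κ i ≤ κ m
  have hκi : cc f t1 t2 i ≤ cc f t1 t2 m := by
    rcases lt_trichotomy i t1 with h | h | h
    · -- i < t1 : use hull property of t1 with chord (i, m)
      have hA : 0 ≤ cc f i m t1 := h1.2 i m h.le hm1.le hmT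
      have hA' : 0 ≤ ((t2:ℤ) - t1) * cc f i m t1 :=
        mul_nonneg (by exact_mod_cast sub_nonneg.mpr (Int.ofNat_le.mpr h12.le)) hA
      have hid : ((t2:ℤ) - t1) * cc f i m t1
          = -(cc f t1 t2 i) * ((m:ℤ) - t1) - (cc f t1 t2 m) * ((t1:ℤ) - i) := by
        unfold cc; ring
      rw [hid] at hA'
      have e1 : (0:ℤ) ≤ (t1:ℤ) - i := by
        have : (i:ℤ) ≤ t1 := by exact_mod_cast h.le
        linarith
      have e2 : (0:ℤ) < (m:ℤ) - t1 := by
        have : (t1:ℤ) < m := by exact_mod_cast hm1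
        linarith
      have e3 : 0 ≤ (cc f t1 t2 m) * ((t1:ℤ) - i) := mul_nonneg hκm e1
      have e4 : cc f t1 t2 i * ((m:ℤ) - t1) ≤ 0 * ((m:ℤ) - t1) := by linarith
      have := le_of_mul_le_mul_right e4 e2
      linarith
    · rw [h, cc_left]; exact hκm
    · exact hmax' i h (lt_trans him hm2)
  -- κ j ≤ κ m
  have hκj : cc f t1 t2 j ≤ cc f t1 t2 m := by
    rcases lt_trichotomy t2 j with h | h | h
    · -- t2 < j : use hull property of t2 with chord (m, j)
      have hA : 0 ≤ cc f m j t2 := h2.2 m j hm2.le h.le hjT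
      have hA' : 0 ≤ ((t2:ℤ) - t1) * cc f m j t2 :=
        mul_nonneg (by exact_mod_cast sub_nonneg.mpr (Int.ofNat_le.mpr h12.le)) hA
      have hid : ((t2:ℤ) - t1) * cc f m j t2
          = -(cc f t1 t2 m) * ((j:ℤ) - t2) - (cc f t1 t2 j) * ((t2:ℤ) - m) := by
        unfold cc; ring
      rw [hid] at hA'
      have e1 : (0:ℤ) ≤ (j:ℤ) - t2 := by
        have : (t2:ℤ) ≤ j := by exact_mod_cast h.le
        linarith
      have e2 : (0:ℤ) < (t2:ℤ) - m := by
        have : (m:ℤ) < t2 := by exact_mod_cast hm2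
        linarith
      have e3 : 0 ≤ (cc f t1 t2 m) * ((j:ℤ) - t2) := mul_nonneg hκm e1
      have e4 : cc f t1 t2 j * ((t2:ℤ) - m) ≤ 0 * ((t2:ℤ) - m) := by linarith
      have := le_of_mul_le_mul_right e4 e2
      linarith
    · rw [← h, cc_right]; exact hκm
    · exact hmax' j (lt_trans hm1 hmj) h
  -- final contradiction
  have hid : (cc f t1 t2 m - cc f t1 t2 i) * ((j:ℤ) - m)
      + (cc f t1 t2 m - cc f t1 t2 j) * ((m:ℤ) - i)
      = ((t2:ℤ) - t1) * cc f i j m := by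
    unfold cc; ring
  have e1 : (0:ℤ) ≤ (cc f t1 t2 m - cc f t1 t2 i) * ((j:ℤ) - m) := by
    apply mul_nonneg (by linarith)
    have : (m:ℤ) < j := by exact_mod_cast hmj
    linarith
  have e2 : (0:ℤ) ≤ (cc f t1 t2 m - cc f t1 t2 j) * ((m:ℤ) - i) := by
    apply mul_nonneg (by linarith)
    have : (i:ℤ) < m := by exact_mod_cast him
    linarith
  have e3 : ((t2:ℤ) - t1) * cc f i j m < 0 := by
    apply mul_neg_of_pos_of_neg _ hneg
    have : (t1:ℤ) < t2 := by exact_mod_cast h12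
    linarith
  linarith


/-- Every point of the path lies at most `N` below the chord from `(0, f 0)` to `(T, f T)`,
provided every chord of width `> N` has some point on or above it. -/
lemma hull_bound (f : ℕ → ℤ) (N : ℕ)
    (hmono : ∀ s t : ℕ, s ≤ t → f s ≤ f t)
    (hlip : ∀ s t : ℕ, s ≤ t → f t - f s ≤ (t:ℤ) - s)
    (hHf : ∀ i j : ℕ, i < j → N < j - i → ∃ t, i < t ∧ t < j ∧ 0 ≤ cc f i j t)
    (T t : ℕ) (ht : t ≤ T) :
    (f T - f 0) * t - (N:ℤ) * T ≤ (f t - f 0) * T := by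
  classical
  set t1 := Nat.findGreatest (IsHull f T) t with ht1def
  have hHt1 : IsHull f T t1 := Nat.findGreatest_spec (Nat.zero_le t) (hull_zero f T)
  have ht1le : t1 ≤ t := Nat.findGreatest_le t
  have hgap : t - t1 ≤ N := by
    by_contra hg
    push_neg at hg
    have htlt : t1 < t := by omega
    have hPex : ∃ s, t ≤ s ∧ IsHull f T s := ⟨T, ht, hull_top f T⟩
    set t2 := Nat.find hPex with ht2def
    obtain ⟨ht2ge, hHt2⟩ := Nat.find_spec hPex
    have ht2min : ∀ s, s < t2 → ¬(t ≤ s ∧ IsHull f T s) := fun s hs => Nat.find_min hPex hs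
    have h12 : t1 < t2 := lt_of_lt_of_le htlt ht2ge
    have hno : ∀ s, t1 < s → s < t2 → ¬ IsHull f T s := by
      intro s hs1 hs2 hH
      rcases le_or_gt s t with hle | hlt
      · exact Nat.findGreatest_is_greatest hs1 hle hH
      · exact ht2min s hs2 ⟨hlt.le, hH⟩
    have hstrict := gap_strict f T t1 t2 hHt1 hHt2 h12 hno
    obtain ⟨s, hs1, hs2, hs3⟩ := hHf t1 t2 h12 (by omega)
    exact absurd hs3 (not_le.mpr (hstrict s hs1 hs2))
  have hA : 0 ≤ cc f 0 T t1 := hHt1.2 0 T (Nat.zero_le _) (le_trans ht1le ht) le_rfl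
  have hAe : cc f 0 T t1 = (f t1 - f 0) * T - (f T - f 0) * t1 := by
    unfold cc; push_cast; ring
  rw [hAe] at hA
  have hm : f t1 ≤ f t := hmono t1 t ht1le
  have hl : f T - f 0 ≤ (T:ℤ) := by
    have := hlip 0 T (Nat.zero_le T); simpa using this
  have hmn : (0:ℤ) ≤ f T - f 0 := by
    have := hmono 0 T (Nat.zero_le T); linarith
  have hgz : ((t:ℤ) - t1) ≤ (N:ℤ) := by omega
  have hgz0 : (0:ℤ) ≤ (t:ℤ) - t1 := by omega
  have key : (f T - f 0) * ((t:ℤ) - t1) ≤ (T:ℤ) * N :=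
    mul_le_mul hl hgz hgz0 (by positivity)
  have h5 : (f t1 - f 0) * T ≤ (f t - f 0) * T :=
    mul_le_mul_of_nonneg_right (by linarith) (by positivity)
  nlinarith [hA, key, h5]


section FactorLemmas
variable {α : Type*}

lemma factor_length (w : ℕ → α) (i n : ℕ) : (factor w i n).length = n := by
  simp [factor]

lemma factor_append (w : ℕ → α) (i m n : ℕ) :
    factor w i (m + n) = factor w i m ++ factor w (i + m) n := by
  unfold factor
  rw [List.range_add, List.map_append, List.map_map]
  congr 1
  apply List.map_congr_left
  intro k _
  simp [Function.comp, Nat.add_assoc]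

lemma factor_take (w : ℕ → α) (i n k : ℕ) (h : k ≤ n) :
    (factor w i n).take k = factor w i k := by
  obtain ⟨m, rfl⟩ : ∃ m, n = k + m := ⟨n - k, by omega⟩
  rw [factor_append]
  have := (List.take_left : List.take (factor w i k).length (factor w i k ++ factor w (i + k) m) = factor w i k)
  rwa [factor_length] at this

lemma factor_drop (w : ℕ → α) (i n k : ℕ) (h : k ≤ n) :
    (factor w i n).drop k = factor w (i + k) (n - k) := by
  obtain ⟨m, rfl⟩ : ∃ m, n = k + m := ⟨n - k, by omega⟩
  have hm : k + m - k = m := by omega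
  rw [hm, factor_append]
  have := (List.drop_left : List.drop (factor w i k).length (factor w i k ++ factor w (i + k) m) = factor w (i + k) m)
  rwa [factor_length] at this

variable [DecidableEq α]

/-- count of letter `a` in the prefix of length `t`. -/
def Fc (w : ℕ → α) (a : α) (t : ℕ) : ℤ := ((factor w 0 t).count a : ℤ)

lemma Fc_sub (w : ℕ → α) (a : α) (i n : ℕ) :
    ((factor w i n).count a : ℤ) = Fc w a (i + n) - Fc w a i := by
  unfold Fc
  rw [factor_append w 0 i n, List.count_append]
  push_cast
  simp

lemma Fc_mono (w : ℕ → α) (a : α) : ∀ s t : ℕ, s ≤ t → Fc w a s ≤ Fc w a t := by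
  intro s t hst
  obtain ⟨m, rfl⟩ : ∃ m, t = s + m := ⟨t - s, by omega⟩
  have := Fc_sub w a s m
  have h0 : (0:ℤ) ≤ ((factor w s m).count a : ℤ) := by positivity
  linarith

lemma Fc_lip (w : ℕ → α) (a : α) : ∀ s t : ℕ, s ≤ t → Fc w a t - Fc w a s ≤ (t:ℤ) - s := by
  intro s t hst
  obtain ⟨m, rfl⟩ : ∃ m, t = s + m := ⟨t - s, by omega⟩
  have := Fc_sub w a s m
  have h0 : ((factor w s m).count a : ℤ) ≤ m := by
    have := (List.count_le_length : (factor w s m).count a ≤ (factor w s m).length)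
    have hl := factor_length w s m
    omega
  push_cast
  linarith

end FactorLemmas

section WAU
variable {α : Type*} [DecidableEq α]

/-- Extract the integer cross-multiplied equation from a frequency border. -/
lemma border_data (w : ℕ → α) (a : α) (i n : ℕ)
    (hb : WeaklyAbelianBordered (factor w i n)) :
    ∃ k m : ℕ, 0 < k ∧ k < n ∧ 0 < m ∧ m < n ∧
      (Fc w a (i + k) - Fc w a i) * (m : ℤ)
        = (Fc w a (i + n) - Fc w a (i + (n - m))) * (k : ℤ) := by
  obtain ⟨p, s, hp, hs, hpne, hplt, hsne, hslt, hfreq⟩ := hb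
  have hlen : (factor w i n).length = n := factor_length w i n
  set k := p.length with hk
  set m := s.length with hm
  have hk1 : 0 < k := List.length_pos_iff.mpr hpne
  have hkn : k < n := by rw [hlen] at hplt; exact hplt
  have hm1 : 0 < m := List.length_pos_iff.mpr hsne
  have hmn : m < n := by rw [hlen] at hslt; exact hslt
  refine ⟨k, m, hk1, hkn, hm1, hmn, ?_⟩
  -- identify p and s
  rw [List.prefix_iff_eq_take] at hp
  rw [← hk, factor_take w i n k hkn.le] at hp
  rw [List.suffix_iff_eq_drop] at hs
  rw [← hm, hlen, factor_drop w i n (n - m) (by omega)] at hs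
  have hnm : n - (n - m) = m := by omega
  rw [hnm] at hs
  -- counts
  have hpc : (p.count a : ℤ) = Fc w a (i + k) - Fc w a i := by
    rw [hp]; exact Fc_sub w a i k
  have hsc : (s.count a : ℤ) = Fc w a (i + n) - Fc w a (i + (n - m)) := by
    rw [hs]
    have := Fc_sub w a (i + (n - m)) m
    have he : i + (n - m) + m = i + n := by omega
    rw [he] at this
    exact this
  -- frequencies
  have hq := hfreq a
  rw [hp, hs] at hq
  rw [factor_length, factor_length] at hq
  rw [← hp, ← hs] at hq
  rw [div_eq_div_iff (by exact_mod_cast hk1.ne' : (k:ℚ) ≠ 0) (by exact_mod_cast hm1.ne' : (m:ℚ) ≠ 0)] at hq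
  have hZ : (p.count a : ℤ) * m = (s.count a : ℤ) * k := by exact_mod_cast hq
  rw [hpc, hsc] at hZ
  exact hZ

lemma wau_below (w : ℕ → α) (a : α) (i n : ℕ)
    (hstrict : ∀ t, i < t → t < i + n → cc (Fc w a) i (i + n) t < 0) :
    ¬ WeaklyAbelianBordered (factor w i n) := by
  intro hb
  obtain ⟨k, m, hk1, hkn, hm1, hmn, hZ⟩ := border_data w a i n hb
  obtain ⟨d, hd⟩ : ∃ d, n = m + d := ⟨n - m, by omega⟩
  have hnm : n - m = d := by omega
  rw [hnm] at hZ
  set A := Fc w a i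
  set B := Fc w a (i + k)
  set C := Fc w a (i + d)
  set E := Fc w a (i + n)
  have h1 := hstrict (i + k) (by omega) (by omega)
  have h2 := hstrict (i + d) (by omega) (by omega)
  unfold cc at h1 h2
  have hn : (n:ℤ) = (m:ℤ) + (d:ℤ) := by omega
  have hik : ((i + k : ℕ) : ℤ) = (i:ℤ) + k := by push_cast; ring
  have hid : ((i + d : ℕ) : ℤ) = (i:ℤ) + d := by push_cast; ring
  have hin : ((i + n : ℕ) : ℤ) = (i:ℤ) + n := by push_cast; ring
  rw [hik, hin, hn] at h1
  rw [hid, hin, hn] at h2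
  -- h1 : (B - A) * ((i + (m+d)) - i) - (E - A) * ((i + k) - i) < 0
  have h1' : (B - A) * ((m:ℤ) + d) < (E - A) * k := by linarith
  have h2' : (C - A) * ((m:ℤ) + d) < (E - A) * d := by linarith
  have hmp : (0:ℤ) < m := by exact_mod_cast hm1
  have hkp : (0:ℤ) < k := by exact_mod_cast hk1
  have m1 := mul_lt_mul_of_pos_right h1' hmp
  have m2 := mul_lt_mul_of_pos_right h2' hkp
  have m3 : (B - A) * (m:ℤ) * ((m:ℤ) + d) = (E - C) * (k:ℤ) * ((m:ℤ) + d) := by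
    rw [hZ]
  nlinarith [m1, m2, m3]

lemma wau_above (w : ℕ → α) (a : α) (i n : ℕ)
    (hstrict : ∀ t, i < t → t < i + n → 0 < cc (Fc w a) i (i + n) t) :
    ¬ WeaklyAbelianBordered (factor w i n) := by
  intro hb
  obtain ⟨k, m, hk1, hkn, hm1, hmn, hZ⟩ := border_data w a i n hb
  obtain ⟨d, hd⟩ : ∃ d, n = m + d := ⟨n - m, by omega⟩
  have hnm : n - m = d := by omega
  rw [hnm] at hZ
  set A := Fc w a i
  set B := Fc w a (i + k)
  set C := Fc w a (i + d)
  set E := Fc w a (i + n)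
  have h1 := hstrict (i + k) (by omega) (by omega)
  have h2 := hstrict (i + d) (by omega) (by omega)
  unfold cc at h1 h2
  have hn : (n:ℤ) = (m:ℤ) + (d:ℤ) := by omega
  have hik : ((i + k : ℕ) : ℤ) = (i:ℤ) + k := by push_cast; ring
  have hid : ((i + d : ℕ) : ℤ) = (i:ℤ) + d := by push_cast; ring
  have hin : ((i + n : ℕ) : ℤ) = (i:ℤ) + n := by push_cast; ring
  rw [hik, hin, hn] at h1
  rw [hid, hin, hn] at h2
  have h1' : (E - A) * k < (B - A) * ((m:ℤ) + d) := by linarith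
  have h2' : (E - A) * d < (C - A) * ((m:ℤ) + d) := by linarith
  have hmp : (0:ℤ) < m := by exact_mod_cast hm1
  have hkp : (0:ℤ) < k := by exact_mod_cast hk1
  have m1 := mul_lt_mul_of_pos_right h1' hmp
  have m2 := mul_lt_mul_of_pos_right h2' hkp
  have m3 : (B - A) * (m:ℤ) * ((m:ℤ) + d) = (E - C) * (k:ℤ) * ((m:ℤ) + d) := by
    rw [hZ]
  nlinarith [m1, m2, m3]

end WAU

end Stmt11Aux

set_option maxHeartbeats 1600000 in
open Stmt11Aux in
/-- If an infinite word over a finite alphabet has only finitely many weakly abelian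
unbordered factors, then it is balanced. -/
theorem stmt_11 {α : Type*} [DecidableEq α] [Fintype α] (w : ℕ → α)
    (h : {u : List α | IsFactor u w ∧ ¬ WeaklyAbelianBordered u}.Finite) :
    ∃ K : ℕ, ∀ (a : α) (i j n : ℕ),
      |((factor w i n).count a : ℤ) - ((factor w j n).count a : ℤ)| ≤ K := by
  classical
  obtain ⟨N, hNmem⟩ : ∃ N : ℕ,
      ∀ u : List α, IsFactor u w → ¬ WeaklyAbelianBordered u → u.length < N := by
    refine ⟨h.toFinset.sup (fun u => u.length) + 1, ?_⟩
    intro u hu1 hu2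
    have hmem : u ∈ h.toFinset := by rw [Set.Finite.mem_toFinset]; exact ⟨hu1, hu2⟩
    have hle : u.length ≤ h.toFinset.sup (fun u => u.length) := Finset.le_sup hmem
    omega
  refine ⟨4 * N, ?_⟩
  intro a i j n
  rcases Nat.eq_zero_or_pos n with rfl | hn
  · simp [factor]
  have hf0' : Fc w a 0 = 0 := by simp [Fc, factor]
  have hmono := Fc_mono w a
  have hlip := Fc_lip w a
  set f : ℕ → ℤ := Fc w a with hf
  clear_value f
  have hf0 : f 0 = 0 := hf0'
  -- the two hull hypotheses
  have hHf : ∀ i' j' : ℕ, i' < j' → N < j' - i' → ∃ t, i' < t ∧ t < j' ∧ 0 ≤ cc f i' j' t := by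
    intro i' j' hij hNij
    by_contra hcon
    push_neg at hcon
    have hj' : i' + (j' - i') = j' := by omega
    have hwau : ¬ WeaklyAbelianBordered (factor w i' (j' - i')) := by
      apply wau_below w a i' (j' - i')
      intro t ht1 ht2
      rw [hj', ← hf]
      exact hcon t ht1 (by omega)
    have hfac : IsFactor (factor w i' (j' - i')) w :=
      ⟨i', by rw [factor_length]⟩
    have := hNmem _ hfac hwau
    rw [factor_length] at this
    omega
  set g : ℕ → ℤ := fun t => (t : ℤ) - f t with hg
  have hccg : ∀ i' j' t, cc g i' j' t = - cc f i' j' t := by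
    intro i' j' t
    simp only [hg, cc]
    ring
  have hg0 : g 0 = 0 := by simp [hg, hf0]
  have hmonog : ∀ s t : ℕ, s ≤ t → g s ≤ g t := by
    intro s t hst
    have := hlip s t hst
    simp only [hg]
    linarith
  have hlipg : ∀ s t : ℕ, s ≤ t → g t - g s ≤ (t:ℤ) - s := by
    intro s t hst
    have := hmono s t hst
    simp only [hg]
    linarith
  clear_value g
  have hHg : ∀ i' j' : ℕ, i' < j' → N < j' - i' → ∃ t, i' < t ∧ t < j' ∧ 0 ≤ cc g i' j' t := by
    intro i' j' hij hNij
    by_contra hcon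
    push_neg at hcon
    have hj' : i' + (j' - i') = j' := by omega
    have hwau : ¬ WeaklyAbelianBordered (factor w i' (j' - i')) := by
      apply wau_above w a i' (j' - i')
      intro t ht1 ht2
      rw [hj', ← hf]
      have := hcon t ht1 (by omega)
      rw [hccg] at this
      linarith
    have hfac : IsFactor (factor w i' (j' - i')) w :=
      ⟨i', by rw [factor_length]⟩
    have := hNmem _ hfac hwau
    rw [factor_length] at this
    omega
  -- the band
  set T := max (i + n) (j + n) with hT
  have hTi : i + n ≤ T := le_max_left _ _
  have hTj : j + n ≤ T := le_max_right _ _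
  have hT0 : 0 < T := by omega
  clear_value T
  have band : ∀ t : ℕ, t ≤ T →
      f T * t - (N:ℤ) * T ≤ f t * T ∧ f t * T ≤ f T * t + (N:ℤ) * T := by
    intro t ht
    have h1 := hull_bound f N hmono hlip hHf T t ht
    have h2 := hull_bound g N hmonog hlipg hHg T t ht
    rw [hf0] at h1
    rw [hg0] at h2
    simp only [hg] at h2
    constructor
    · nlinarith [h1]
    · nlinarith [h2]
  have hb1 := band i (by omega)
  have hb2 := band (i + n) (by omega)
  have hb3 := band j (by omega)
  have hb4 := band (j + n) (by omega)
  have hTpos : (0:ℤ) < (T:ℤ) := by exact_mod_cast hT0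
  rw [Fc_sub w a i n, Fc_sub w a j n, ← hf]
  rw [abs_le]
  have c1 : ((i + n : ℕ) : ℤ) = (i:ℤ) + n := by push_cast; ring
  have c2 : ((j + n : ℕ) : ℤ) = (j:ℤ) + n := by push_cast; ring
  rw [c1] at hb2
  rw [c2] at hb4
  have hub : ((f (i+n) - f i) - (f (j+n) - f j)) * (T:ℤ) ≤ (4 * (N:ℤ)) * T := by
    linarith [hb1.1, hb1.2, hb2.1, hb2.2, hb3.1, hb3.2, hb4.1, hb4.2]
  have hlb : (-(4 * (N:ℤ))) * T ≤ ((f (i+n) - f i) - (f (j+n) - f j)) * (T:ℤ) := by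
    linarith [hb1.1, hb1.2, hb2.1, hb2.2, hb3.1, hb3.2, hb4.1, hb4.2]
  have hub' := le_of_mul_le_mul_right hub hTpos
  have hlb' := le_of_mul_le_mul_right hlb hTpos
  constructor
  · push_cast
    linarith
  · push_cast
    linarith
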